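/- Let G be a Young function and suppose there exist constants 1 < g⁻ ≤ g⁺ < ∞ such that g⁻ ≤ t G'(t)/G(t) ≤ g⁺ for all t > 0 (where G' = g). Then for every η > 0 there exists a constant C_η > 0 such that G(a+b) ≤ C_η G(a) + (1+η)^{g⁺} G(b) for all a, b > 0. -/

import Mathlib

open Filter Topology Set

/-- For a Young function `G` satisfying the Lieberman-type condition
`g⁻ ≤ t G'(t) / G t ≤ g⁺` (with `1 < g⁻ ≤ g⁺ < ∞`), for every `η > 0` there is `C_η > 0`
with `G (a+b) ≤ C_η * G a + (1+η)^{g⁺} * G b` for all `a, b > 0`. -/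
theorem stmt2 (g : ℝ → ℝ) (G : ℝ → ℝ) (gm gp : ℝ)
    (hg_nonneg : ∀ s, 0 ≤ g s)
    (hg0 : g 0 = 0)
    (hg_pos : ∀ s > 0, 0 < g s)
    (hg_mono : MonotoneOn g (Set.Ioi 0))
    (hG : ∀ t ≥ 0, G t = ∫ s in (0:ℝ)..t, g s)
    (hgm : 1 < gm) (hgmgp : gm ≤ gp)
    (hLieb : ∀ t > 0, gm ≤ t * g t / G t ∧ t * g t / G t ≤ gp) :
    ∀ η > 0, ∃ C > 0, ∀ a > 0, ∀ b > 0,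
      G (a + b) ≤ C * G a + (1 + η) ^ gp * G b := by
  have hgp1 : 1 < gp := lt_of_lt_of_le hgm hgmgp
  have hgp0 : 0 < gp := lt_trans one_pos hgp1
  -- g is monotone on [0,∞)
  have hmono : MonotoneOn g (Set.Ici 0) := by
    intro x hx y hy hxy
    rcases eq_or_lt_of_le (Set.mem_Ici.mp hx) with h | h
    · rw [← h, hg0]; exact hg_nonneg y
    · exact hg_mono h (lt_of_lt_of_le h hxy) hxy
  -- integrability
  have hint : ∀ u v : ℝ, 0 ≤ u → 0 ≤ v → IntervalIntegrable g MeasureTheory.volume u v := by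
    intro u v hu hv
    exact MonotoneOn.intervalIntegrable
      (hmono.mono (fun x hx => le_trans (le_inf hu hv) hx.1))
  have hGnonneg : ∀ t, 0 ≤ t → 0 ≤ G t := by
    intro t ht
    rw [hG t ht]
    exact intervalIntegral.integral_nonneg ht (fun x _ => hg_nonneg x)
  have hsplit : ∀ u v : ℝ, 0 ≤ u → u ≤ v → G v - G u = ∫ s in u..v, g s := by
    intro u v hu huv
    have hv : 0 ≤ v := le_trans hu huv
    rw [hG u hu, hG v hv, ← intervalIntegral.integral_add_adjacent_intervals
      (hint 0 u le_rfl hu) (hint u v hu hv)]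
    ring
  have hGmono : ∀ u v : ℝ, 0 ≤ u → u ≤ v → G u ≤ G v := by
    intro u v hu huv
    have h := hsplit u v hu huv
    have h2 : 0 ≤ ∫ s in u..v, g s :=
      intervalIntegral.integral_nonneg huv (fun x _ => hg_nonneg x)
    linarith
  have hGpos : ∀ t, 0 < t → 0 < G t := by
    intro t ht
    rcases (hGnonneg t ht.le).lt_or_eq with h | h
    · exact h
    · exfalso
      have := (hLieb t ht).1
      rw [← h, div_zero] at this
      linarith
  -- one-step inequality
  have honestep : ∀ u v : ℝ, 0 < u → u ≤ v → G v * (1 - gp * Real.log (v / u)) ≤ G u := by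
    intro u v hu huv
    have hv : 0 < v := lt_of_lt_of_le hu huv
    by_cases hsign : 1 - gp * Real.log (v / u) ≤ 0
    · calc G v * (1 - gp * Real.log (v / u)) ≤ 0 :=
            mul_nonpos_of_nonneg_of_nonpos (hGpos v hv).le hsign
        _ ≤ G u := hGnonneg u hu.le
    push_neg at hsign
    have hGv := hGpos v hv
    have hintdiv : IntervalIntegrable (fun s : ℝ => gp * G v * (1 / s))
        MeasureTheory.volume u v := by
      apply ContinuousOn.intervalIntegrable
      apply ContinuousOn.mul continuousOn_const
      apply ContinuousOn.div continuousOn_const continuousOn_id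
      intro x hx
      have : u ≤ x := by
        rcases hx with ⟨h1, _⟩
        exact le_trans (by simp [min_eq_left huv]) h1
      exact ne_of_gt (lt_of_lt_of_le hu this)
    have key : ∫ s in u..v, g s ≤ ∫ s in u..v, gp * G v * (1 / s) := by
      apply intervalIntegral.integral_mono_on huv (hint u v hu.le hv.le) hintdiv
      intro s hs
      have hs0 : 0 < s := lt_of_lt_of_le hu hs.1
      have hGs := hGpos s hs0
      have hl := (hLieb s hs0).2
      rw [div_le_iff₀ hGs] at hl
      have h2 : G s ≤ G v := hGmono s v hs0.le hs.2
      rw [mul_one_div, le_div_iff₀ hs0]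
      nlinarith
    have hrhs : ∫ s in u..v, gp * G v * (1 / s) = gp * G v * Real.log (v / u) := by
      rw [intervalIntegral.integral_const_mul, integral_one_div]
      intro h0
      have : u ≤ (0:ℝ) := le_trans (le_inf le_rfl huv) h0.1
      linarith
    have hdiff := hsplit u v hu.le huv
    have : G v * (1 - gp * Real.log (v / u)) = G v - gp * G v * Real.log (v / u) := by ring
    rw [this]
    rw [hrhs] at key
    linarith
  -- chain: G (u * exp c) ≤ exp (gp*c) * G u
  have hchain : ∀ u : ℝ, 0 < u → ∀ c : ℝ, 0 ≤ c →
      G (u * Real.exp c) ≤ Real.exp (gp * c) * G u := by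
    intro u hu c hc
    have hstep : ∀ᶠ n : ℕ in atTop,
        G (u * Real.exp c) * (1 + -(gp * c) / n) ^ n ≤ G u := by
      filter_upwards [eventually_gt_atTop ⌈gp * c⌉₊] with n hn
      have hn' : gp * c < n := lt_of_le_of_lt (Nat.le_ceil _) (Nat.cast_lt.2 hn)
      have hnpos : (0:ℝ) < n := lt_of_le_of_lt (mul_nonneg hgp0.le hc) hn'
      have hpos : 0 < 1 + -(gp * c) / n := by
        rw [neg_div, ← sub_eq_add_neg, sub_pos, div_lt_one hnpos]; exact hn'
      have claim : ∀ k : ℕ, k ≤ n →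
          G (u * Real.exp (k * (c / n))) * (1 + -(gp * c) / n) ^ k ≤ G u := by
        intro k hk
        induction k with
        | zero => simp
        | succ k ih =>
          have ihk := ih (Nat.le_of_succ_le hk)
          have hcn : 0 ≤ c / n := div_nonneg hc hnpos.le
          have huk : 0 < u * Real.exp ((k : ℝ) * (c / n)) := mul_pos hu (Real.exp_pos _)
          have hle : u * Real.exp ((k : ℝ) * (c / n)) ≤
              u * Real.exp (((k : ℝ) + 1) * (c / n)) := by
            apply mul_le_mul_of_nonneg_left _ hu.le
            apply Real.exp_le_exp.2
            nlinarith
          have hlog : Real.log ((u * Real.exp (((k : ℝ) + 1) * (c / n))) /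
              (u * Real.exp ((k : ℝ) * (c / n)))) = c / n := by
            rw [mul_div_mul_left _ _ (ne_of_gt hu), ← Real.exp_sub, Real.log_exp]
            ring
          have h1 := honestep _ _ huk hle
          rw [hlog] at h1
          have hfac : (1 : ℝ) - gp * (c / n) = 1 + -(gp * c) / n := by ring
          rw [hfac] at h1
          calc G (u * Real.exp ((↑(k+1) : ℝ) * (c / n))) * (1 + -(gp * c) / n) ^ (k + 1)
              = (G (u * Real.exp (((k:ℝ) + 1) * (c / n))) * (1 + -(gp * c) / n)) *
                (1 + -(gp * c) / n) ^ k := by push_cast; ring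
            _ ≤ G (u * Real.exp ((k : ℝ) * (c / n))) * (1 + -(gp * c) / n) ^ k :=
                mul_le_mul_of_nonneg_right h1 (pow_nonneg hpos.le k)
            _ ≤ G u := ihk
      have hfin := claim n le_rfl
      rw [mul_div_cancel₀ c (ne_of_gt hnpos)] at hfin
      exact hfin
    have hlim : Tendsto (fun n : ℕ => G (u * Real.exp c) * (1 + -(gp * c) / n) ^ n)
        atTop (𝓝 (G (u * Real.exp c) * Real.exp (-(gp * c)))) :=
      (Real.tendsto_one_add_div_pow_exp (-(gp * c))).const_mul _
    have hle := le_of_tendsto hlim hstep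
    have h2 := mul_le_mul_of_nonneg_right hle (Real.exp_pos (gp * c)).le
    rw [mul_assoc, ← Real.exp_add, neg_add_cancel, Real.exp_zero, mul_one] at h2
    linarith [h2, mul_comm (G u) (Real.exp (gp * c))]
  -- scaling lemma
  have hscale : ∀ u : ℝ, 0 < u → ∀ l : ℝ, 1 ≤ l → G (l * u) ≤ l ^ gp * G u := by
    intro u hu l hl
    have hl0 : 0 < l := lt_of_lt_of_le one_pos hl
    have h := hchain u hu (Real.log l) (Real.log_nonneg hl)
    rw [Real.exp_log hl0, mul_comm u l] at h
    rw [Real.rpow_def_of_pos hl0, mul_comm (Real.log l) gp]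
    exact h
  intro η hη
  have hC0 : (0:ℝ) < 1 + 1/η := by positivity
  refine ⟨(1 + 1/η) ^ gp, Real.rpow_pos_of_pos hC0 gp, ?_⟩
  intro a ha b hb
  have hab0 : (0:ℝ) ≤ a + b := by linarith
  by_cases hab : a ≤ η * b
  · have h1 : a + b ≤ (1 + η) * b := by nlinarith
    have h2 : G (a + b) ≤ G ((1 + η) * b) := hGmono _ _ hab0 h1
    have h3 := hscale b hb (1 + η) (by linarith)
    have h4 : 0 ≤ (1 + 1/η) ^ gp * G a :=
      mul_nonneg (Real.rpow_pos_of_pos hC0 gp).le (hGnonneg a ha.le)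
    linarith
  · push_neg at hab
    have hba : b ≤ (1/η) * a := by
      rw [one_div, inv_mul_eq_div, le_div_iff₀ hη]
      nlinarith
    have h1 : a + b ≤ (1 + 1/η) * a := by nlinarith
    have h2 : G (a + b) ≤ G ((1 + 1/η) * a) := hGmono _ _ hab0 h1
    have h3 := hscale a ha (1 + 1/η) (le_add_of_nonneg_right (by positivity : (0:ℝ) ≤ 1/η))
    have h4 : 0 ≤ (1 + η) ^ gp * G b :=
      mul_nonneg (Real.rpow_pos_of_pos (by linarith) gp).le (hGnonneg b hb.le)
    linarith
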